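/- There exist five points A,B,C,D,E in cyclic order on a circle of radius 65/18 in the Euclidean plane with |AB| = 11/3, |BC| = 56/9, |CD| = 13/3, |DE| = 11/3, |EA| = 25/9, such that all five diagonals are rational: |CE| = 20/3 and the remaining diagonals have lengths 65/9, 52/9, 323/45, 52/9, and the pentagon has area 28. -/

import Mathlib

set_option maxHeartbeats 1000000

open MeasureTheory Set Pointwise

namespace RatPentagon

lemma mem_hull3 {a b c p : ℝ × ℝ} {w1 w2 w3 : ℝ} (h1 : 0 ≤ w1) (h2 : 0 ≤ w2) (h3 : 0 ≤ w3)
    (hs : w1 + w2 + w3 = 1) (hp : w1 • a + w2 • b + w3 • c = p) :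
    p ∈ convexHull ℝ ({a, b, c} : Set (ℝ × ℝ)) := by
  have h := Finset.centerMass_mem_convexHull (R := ℝ) (s := ({a,b,c} : Set (ℝ×ℝ)))
    (Finset.univ : Finset (Fin 3)) (w := ![w1,w2,w3])
    (by intro i _; fin_cases i <;> simpa)
    (by simp [Fin.sum_univ_three, hs])
    (z := ![a,b,c]) (by intro i _; fin_cases i <;> simp)
  rw [Finset.centerMass] at h
  simpa [Fin.sum_univ_three, hs, add_assoc, hp] using h

lemma line_null (u v w : ℝ) (huv : v ≠ 0 ∨ u ≠ 0) :
    volume {p : ℝ × ℝ | u * p.1 + v * p.2 = w} = 0 := by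
  by_cases hv : v = 0
  · have hu : u ≠ 0 := by rcases huv with h | h; exacts [absurd hv h, h]
    subst hv
    have hset : {p : ℝ × ℝ | u * p.1 + 0 * p.2 = w} = (({w/u} : Set ℝ) ×ˢ (univ : Set ℝ)) := by
      ext ⟨px, py⟩
      simp only [mem_setOf_eq, mem_prod, mem_singleton_iff, mem_univ, and_true,
        zero_mul, add_zero]
      rw [eq_div_iff hu]
      constructor <;> intro h <;> linarith
    rw [hset, Measure.volume_eq_prod, Measure.prod_prod]
    simp
  · have hmeas : MeasurableSet {p : ℝ × ℝ | u * p.1 + v * p.2 = w} := by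
      have : Continuous fun p : ℝ × ℝ => u * p.1 + v * p.2 := by fun_prop
      exact this.measurable (measurableSet_singleton w)
    rw [Measure.volume_eq_prod, Measure.prod_apply hmeas]
    have hz : ∀ x : ℝ, (Prod.mk x ⁻¹' {p : ℝ × ℝ | u * p.1 + v * p.2 = w}) = {(w - u * x)/v} := by
      intro x
      ext y
      simp only [mem_preimage, mem_setOf_eq, mem_singleton_iff]
      rw [eq_div_iff hv]
      constructor <;> intro h <;> linarith [h]
    simp [hz]

lemma base_tri_hull :
    convexHull ℝ ({((0:ℝ),(0:ℝ)), (1,0), (0,1)} : Set (ℝ × ℝ)) =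
      {p : ℝ × ℝ | 0 ≤ p.1 ∧ 0 ≤ p.2 ∧ p.1 + p.2 ≤ 1} := by
  apply Subset.antisymm
  · apply convexHull_min
    · rintro p (rfl | rfl | rfl) <;> norm_num
    · rintro ⟨x1, y1⟩ hx ⟨x2, y2⟩ hy α β hα hβ hab
      simp only [mem_setOf_eq] at hx hy ⊢
      simp only [Prod.smul_mk, smul_eq_mul, Prod.mk_add_mk]
      refine ⟨by nlinarith [hx.1, hy.1], by nlinarith [hx.2.1, hy.2.1], by nlinarith [hx.2.2, hy.2.2]⟩
  · rintro ⟨x, y⟩ ⟨hx, hy, hxy⟩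
    exact mem_hull3 (w1 := 1 - x - y) (w2 := x) (w3 := y) (by linarith) hx hy (by ring)
      (by simp only [Prod.smul_mk, smul_eq_mul, Prod.mk_add_mk, Prod.mk.injEq]; constructor <;> ring)

lemma base_tri_vol :
    volume (convexHull ℝ ({((0:ℝ),(0:ℝ)), (1,0), (0,1)} : Set (ℝ × ℝ))) = ENNReal.ofReal (1/2) := by
  rw [base_tri_hull]
  set S : Set (ℝ × ℝ) := {p : ℝ × ℝ | 0 ≤ p.1 ∧ 0 ≤ p.2 ∧ p.1 + p.2 ≤ 1} with hS
  set RB : Set (ℝ × ℝ) := regionBetween (fun _ => (0:ℝ)) (fun x => 1 - x) (Ioo 0 1) with hRB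
  have hint0 : IntegrableOn (fun _ : ℝ => (0:ℝ)) (Ioo 0 1) volume := integrableOn_zero
  have hint1 : IntegrableOn (fun x : ℝ => 1 - x) (Ioo 0 1) volume := by
    apply IntegrableOn.mono_set (t := Icc (0:ℝ) 1) _ Ioo_subset_Icc_self
    exact (continuous_const.sub continuous_id).continuousOn.integrableOn_compact isCompact_Icc
  have hreg : volume RB = ENNReal.ofReal (1/2) := by
    rw [hRB, Measure.volume_eq_prod,
      volume_regionBetween_eq_integral hint0 hint1 measurableSet_Ioo
        (by intro x hx; simp only [mem_Ioo] at hx; linarith)]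
    congr 1
    simp only [Pi.sub_apply, sub_zero]
    rw [← integral_Ioc_eq_integral_Ioo, ← intervalIntegral.integral_of_le (by norm_num : (0:ℝ) ≤ 1)]
    have h1 : ∫ x in (0:ℝ)..1, (1 - x) =
        (∫ _x in (0:ℝ)..1, (1:ℝ)) - ∫ x in (0:ℝ)..1, x := by
      apply intervalIntegral.integral_sub intervalIntegrable_const
      exact intervalIntegral.intervalIntegrable_id
    rw [h1, integral_id]
    simp
    norm_num
  have hsub1 : RB ⊆ S := by
    rintro ⟨x, y⟩ hp
    simp only [hRB, regionBetween, mem_setOf_eq, mem_Ioo] at hp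
    exact ⟨le_of_lt hp.1.1, le_of_lt hp.2.1, by linarith [hp.2.2]⟩
  have hsub2 : S ⊆ RB ∪ ({p : ℝ × ℝ | 1 * p.1 + 0 * p.2 = 0} ∪ {p : ℝ × ℝ | 1 * p.1 + 0 * p.2 = 1}
      ∪ {p : ℝ × ℝ | 0 * p.1 + 1 * p.2 = 0} ∪ {p : ℝ × ℝ | 1 * p.1 + 1 * p.2 = 1}) := by
    rintro ⟨x, y⟩ ⟨hx, hy, hxy⟩
    by_cases e1 : x = 0
    · right; left; left; left; simp [e1]
    by_cases e2 : x = 1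
    · right; left; left; right; simp [e2]
    by_cases e3 : y = 0
    · right; left; right; simp [e3]
    by_cases e4 : x + y = 1
    · right; right; simp only [mem_setOf_eq, one_mul]; linarith
    · left
      simp only [hRB, regionBetween, mem_setOf_eq, mem_Ioo]
      refine ⟨⟨lt_of_le_of_ne hx (Ne.symm e1), ?_⟩, lt_of_le_of_ne hy (Ne.symm e3), ?_⟩
      · rcases lt_or_eq_of_le (by linarith : x ≤ 1) with h | h
        · exact h
        · exact absurd h e2
      · rcases lt_or_eq_of_le (by linarith : y ≤ 1 - x) with h | h
        · exact h
        · exfalso; exact e4 (by linarith)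
  have hnull : volume ({p : ℝ × ℝ | 1 * p.1 + 0 * p.2 = 0} ∪ {p : ℝ × ℝ | 1 * p.1 + 0 * p.2 = 1}
      ∪ {p : ℝ × ℝ | 0 * p.1 + 1 * p.2 = 0} ∪ {p : ℝ × ℝ | 1 * p.1 + 1 * p.2 = 1}) = 0 := by
    refine measure_union_null (measure_union_null (measure_union_null ?_ ?_) ?_) ?_ <;>
      apply line_null <;> norm_num
  apply le_antisymm
  · calc volume S ≤ volume (RB ∪ _) := measure_mono hsub2
      _ ≤ volume RB + _ := measure_union_le _ _
      _ = ENNReal.ofReal (1/2) := by rw [hreg, hnull, add_zero]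
  · rw [← hreg]; exact measure_mono hsub1

lemma tri_vol (a b c : ℝ × ℝ) :
    volume (convexHull ℝ ({a, b, c} : Set (ℝ × ℝ))) =
      ENNReal.ofReal (|(b.1 - a.1) * (c.2 - a.2) - (b.2 - a.2) * (c.1 - a.1)| / 2) := by
  set M : Matrix (Fin 2) (Fin 2) ℝ := !![b.1 - a.1, c.1 - a.1; b.2 - a.2, c.2 - a.2] with hM
  set L := Matrix.toLin (Module.Basis.finTwoProd ℝ) (Module.Basis.finTwoProd ℝ) M with hL
  have hb : L (1, 0) = (b.1 - a.1, b.2 - a.2) := by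
    have h := Matrix.toLin_self (Module.Basis.finTwoProd ℝ) (Module.Basis.finTwoProd ℝ) M 0
    rw [Module.Basis.finTwoProd_zero] at h
    rw [hL, h, Fin.sum_univ_two, Module.Basis.finTwoProd_zero, Module.Basis.finTwoProd_one]
    simp [hM, Prod.smul_mk, Matrix.cons_val_zero, Matrix.cons_val_one]
  have hc : L (0, 1) = (c.1 - a.1, c.2 - a.2) := by
    have h := Matrix.toLin_self (Module.Basis.finTwoProd ℝ) (Module.Basis.finTwoProd ℝ) M 1
    rw [Module.Basis.finTwoProd_one] at h
    rw [hL, h, Fin.sum_univ_two, Module.Basis.finTwoProd_zero, Module.Basis.finTwoProd_one]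
    simp [hM, Prod.smul_mk, Matrix.cons_val_zero, Matrix.cons_val_one]
  have h0 : L (0, 0) = (0, 0) := map_zero L
  have key : ({a, b, c} : Set (ℝ × ℝ)) =
      (fun z : ℝ × ℝ => z + a) '' (⇑L '' {((0:ℝ),(0:ℝ)), (1,0), (0,1)}) := by
    have e1 : ((0,0) : ℝ × ℝ) + a = a := by ext <;> simp
    have e2 : ((b.1 - a.1, b.2 - a.2) : ℝ × ℝ) + a = b := by ext <;> simp
    have e3 : ((c.1 - a.1, c.2 - a.2) : ℝ × ℝ) + a = c := by ext <;> simp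
    simp only [image_insert_eq, image_singleton, h0, hb, hc, e1, e2, e3]
  have hvadd : (fun z : ℝ × ℝ => z + a) '' (⇑L '' {((0:ℝ),(0:ℝ)), (1,0), (0,1)}) =
      a +ᵥ (⇑L '' {((0:ℝ),(0:ℝ)), (1,0), (0,1)}) := by
    ext z
    simp only [mem_image, Set.mem_vadd_set]
    constructor
    · rintro ⟨w, hw, rfl⟩; exact ⟨w, hw, by rw [vadd_eq_add, add_comm]⟩
    · rintro ⟨w, hw, rfl⟩; exact ⟨w, hw, by rw [vadd_eq_add, add_comm]⟩
  rw [key, hvadd, convexHull_vadd, measure_vadd, ← LinearMap.image_convexHull,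
    Measure.addHaar_image_linearMap, LinearMap.det_toLin, base_tri_vol,
    Matrix.det_fin_two_of, ← ENNReal.ofReal_mul (abs_nonneg _)]
  rw [mul_one_div]
  congr 2
  ring_nf

noncomputable def pa : ℝ × ℝ := (65/18, 0)
noncomputable def pb : ℝ × ℝ := (2047/1170, 616/195)
noncomputable def pc : ℝ × ℝ := (-65/18, 0)
noncomputable def pd : ℝ × ℝ := (-91/90, -52/15)
noncomputable def pe : ℝ × ℝ := (595/234, -100/39)

lemma hull_in_halfspace (s : Set (ℝ × ℝ)) (u v w : ℝ) (h : ∀ p ∈ s, u * p.1 + v * p.2 ≤ w) :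
    convexHull ℝ s ⊆ {p : ℝ × ℝ | u * p.1 + v * p.2 ≤ w} := by
  apply convexHull_min h
  intro x hx y hy α β hα hβ hab
  have hx' : u * x.1 + v * x.2 ≤ w := hx
  have hy' : u * y.1 + v * y.2 ≤ w := hy
  show u * (α • x + β • y).1 + v * (α • x + β • y).2 ≤ w
  simp only [Prod.fst_add, Prod.snd_add, Prod.smul_fst, Prod.smul_snd, smul_eq_mul]
  have hw : α * w + β * w = w := by rw [← add_mul, hab, one_mul]
  nlinarith [mul_le_mul_of_nonneg_left hx' hα, mul_le_mul_of_nonneg_left hy' hβ]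

lemma penta_vol :
    volume (convexHull ℝ ({pa, pb, pc, pd, pe} : Set (ℝ × ℝ))) = 28 := by
  set T1 := convexHull ℝ ({pa, pb, pc} : Set (ℝ × ℝ)) with hT1
  set T2 := convexHull ℝ ({pa, pc, pd} : Set (ℝ × ℝ)) with hT2
  set T3 := convexHull ℝ ({pa, pd, pe} : Set (ℝ × ℝ)) with hT3
  -- half-space containments
  have hT1h : T1 ⊆ {p : ℝ × ℝ | 0 * p.1 + (-1) * p.2 ≤ 0} := by
    apply hull_in_halfspace
    rintro p (rfl | rfl | rfl) <;> norm_num [pa, pb, pc]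
  have hT2h : T2 ⊆ {p : ℝ × ℝ | 0 * p.1 + 1 * p.2 ≤ 0} := by
    apply hull_in_halfspace
    rintro p (rfl | rfl | rfl) <;> norm_num [pa, pc, pd]
  have hT3h : T3 ⊆ {p : ℝ × ℝ | 0 * p.1 + 1 * p.2 ≤ 0} := by
    apply hull_in_halfspace
    rintro p (rfl | rfl | rfl) <;> norm_num [pa, pd, pe]
  have hT2g : T2 ⊆ {p : ℝ × ℝ | 3 * p.1 + (-4) * p.2 ≤ 65/6} := by
    apply hull_in_halfspace
    rintro p (rfl | rfl | rfl) <;> norm_num [pa, pc, pd]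
  have hT3g : T3 ⊆ {p : ℝ × ℝ | (-3) * p.1 + 4 * p.2 ≤ -(65/6)} := by
    apply hull_in_halfspace
    rintro p (rfl | rfl | rfl) <;> norm_num [pa, pd, pe]
  -- decomposition of the hull
  have hunion : convexHull ℝ ({pa, pb, pc, pd, pe} : Set (ℝ × ℝ)) = T1 ∪ (T2 ∪ T3) := by
    apply Subset.antisymm
    · have hP : convexHull ℝ ({pa, pb, pc, pd, pe} : Set (ℝ × ℝ)) ⊆
          {p : ℝ × ℝ | 56 * p.1 + 33 * p.2 ≤ 1820/9 ∧ -(715/6) ≤ 33 * p.1 - 56 * p.2 ∧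
            -(130/9) ≤ 4 * p.1 + 3 * p.2 ∧ 16 * p.1 - 63 * p.2 ≤ 1820/9 ∧
            12 * p.1 - 5 * p.2 ≤ 130/3} := by
        apply convexHull_min
        · rintro p (rfl | rfl | rfl | rfl | rfl) <;>
            refine ⟨by norm_num [pa, pb, pc, pd, pe], by norm_num [pa, pb, pc, pd, pe],
              by norm_num [pa, pb, pc, pd, pe], by norm_num [pa, pb, pc, pd, pe],
              by norm_num [pa, pb, pc, pd, pe]⟩
        · intro x hx y hy α β hα hβ hab
          simp only [mem_setOf_eq] at hx hy ⊢
          simp only [Prod.fst_add, Prod.snd_add, Prod.smul_fst, Prod.smul_snd, smul_eq_mul]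
          have hw1 : α * (1820/9 : ℝ) + β * (1820/9 : ℝ) = 1820/9 := by rw [← add_mul, hab, one_mul]
          have hw2 : α * (-(715/6) : ℝ) + β * (-(715/6) : ℝ) = -(715/6) := by rw [← add_mul, hab, one_mul]
          have hw3 : α * (-(130/9) : ℝ) + β * (-(130/9) : ℝ) = -(130/9) := by rw [← add_mul, hab, one_mul]
          have hw4 : α * (130/3 : ℝ) + β * (130/3 : ℝ) = 130/3 := by rw [← add_mul, hab, one_mul]
          refine ⟨by nlinarith [mul_le_mul_of_nonneg_left hx.1 hα, mul_le_mul_of_nonneg_left hy.1 hβ, hw1],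
            by nlinarith [mul_le_mul_of_nonneg_left hx.2.1 hα, mul_le_mul_of_nonneg_left hy.2.1 hβ, hw2],
            by nlinarith [mul_le_mul_of_nonneg_left hx.2.2.1 hα, mul_le_mul_of_nonneg_left hy.2.2.1 hβ, hw3],
            by nlinarith [mul_le_mul_of_nonneg_left hx.2.2.2.1 hα, mul_le_mul_of_nonneg_left hy.2.2.2.1 hβ, hw1],
            by nlinarith [mul_le_mul_of_nonneg_left hx.2.2.2.2 hα, mul_le_mul_of_nonneg_left hy.2.2.2.2 hβ, hw4]⟩
      refine hP.trans ?_
      rintro ⟨x, y⟩ ⟨h1, h2, h3, h4, h5⟩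
      simp only at h1 h2 h3 h4 h5
      rcases le_total 0 y with hy | hy
      · left
        refine mem_hull3 (w1 := 9/65*x - 168/715*y + 1/2) (w2 := 195/616*y)
          (w3 := -(9/65)*x - 297/3640*y + 1/2) (by linarith) (by linarith) (by linarith)
          (by ring) ?_
        simp only [pa, pb, pc, Prod.smul_mk, smul_eq_mul, Prod.mk_add_mk, Prod.mk.injEq]
        constructor <;> ring
      · rcases le_total (3*x - 4*y) (65/6) with hg | hg
        · right; left
          refine mem_hull3 (w1 := 9/65*x + 27/260*y + 1/2) (w2 := -(9/65)*x + 12/65*y + 1/2)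
            (w3 := -(15/52)*y) (by linarith) (by linarith) (by linarith) (by ring) ?_
          simp only [pa, pc, pd, Prod.smul_mk, smul_eq_mul, Prod.mk_add_mk, Prod.mk.injEq]
          constructor <;> ring
        · right; right
          refine mem_hull3 (w1 := -(36/325)*x + 567/1300*y + 7/5)
            (w2 := -(45/143)*x + 75/572*y + 25/22)
            (w3 := 117/275*x - 156/275*y - 169/110) (by linarith) (by linarith) (by linarith)
            (by ring) ?_
          simp only [pa, pd, pe, Prod.smul_mk, smul_eq_mul, Prod.mk_add_mk, Prod.mk.injEq]
          constructor <;> ring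
    · refine union_subset ?_ (union_subset ?_ ?_) <;>
        · apply convexHull_mono
          intro z hz
          simp only [mem_insert_iff, mem_singleton_iff] at hz ⊢
          tauto
  -- measurability / compactness
  have hc1 : IsCompact T1 := (Set.toFinite _).isCompact_convexHull ℝ
  have hc2 : IsCompact T2 := (Set.toFinite _).isCompact_convexHull ℝ
  have hc3 : IsCompact T3 := (Set.toFinite _).isCompact_convexHull ℝ
  -- a.e. disjointness
  have hd23 : volume (T2 ∩ T3) = 0 := by
    apply measure_mono_null (t := {p : ℝ × ℝ | 3 * p.1 + (-4) * p.2 = 65/6})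
    · rintro p ⟨hp2, hp3⟩
      have := hT2g hp2
      have := hT3g hp3
      simp only [mem_setOf_eq] at *
      linarith
    · exact line_null 3 (-4) (65/6) (by norm_num)
  have hd123 : volume (T1 ∩ (T2 ∪ T3)) = 0 := by
    apply measure_mono_null (t := {p : ℝ × ℝ | 0 * p.1 + 1 * p.2 = 0})
    · rintro p ⟨hp1, hp23⟩
      have h1 := hT1h hp1
      have h2 : 0 * p.1 + 1 * p.2 ≤ 0 := by
        rcases hp23 with h | h
        · exact hT2h h
        · exact hT3h h
      simp only [mem_setOf_eq] at *
      linarith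
    · exact line_null 0 1 0 (by norm_num)
  rw [hunion, measure_union₀ ((hc2.union hc3).measurableSet.nullMeasurableSet) hd123,
    measure_union₀ (hc3.measurableSet.nullMeasurableSet) hd23]
  rw [hT1, hT2, hT3, tri_vol, tri_vol, tri_vol]
  have e1 : |(pb.1 - pa.1) * (pc.2 - pa.2) - (pb.2 - pa.2) * (pc.1 - pa.1)| / 2 = 308/27 := by
    rw [abs_of_nonneg (by norm_num [pa, pb, pc])]; norm_num [pa, pb, pc]
  have e2 : |(pc.1 - pa.1) * (pd.2 - pa.2) - (pc.2 - pa.2) * (pd.1 - pa.1)| / 2 = 338/27 := by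
    rw [abs_of_nonneg (by norm_num [pa, pc, pd])]; norm_num [pa, pc, pd]
  have e3 : |(pd.1 - pa.1) * (pe.2 - pa.2) - (pd.2 - pa.2) * (pe.1 - pa.1)| / 2 = 110/27 := by
    rw [abs_of_nonneg (by norm_num [pa, pd, pe])]; norm_num [pa, pd, pe]
  rw [e1, e2, e3, ← ENNReal.ofReal_add (by norm_num) (by norm_num),
    ← ENNReal.ofReal_add (by norm_num) (by norm_num)]
  norm_num

noncomputable def P (x y : ℝ) : EuclideanSpace ℝ (Fin 2) := (WithLp.equiv 2 (Fin 2 → ℝ)).symm ![x, y]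

lemma P_apply0 (x y : ℝ) : P x y 0 = x := rfl
lemma P_apply1 (x y : ℝ) : P x y 1 = y := rfl

lemma dist_P (x₁ y₁ x₂ y₂ r : ℝ) (hr : 0 ≤ r) (h : (x₁ - x₂)^2 + (y₁ - y₂)^2 = r^2) :
    dist (P x₁ y₁) (P x₂ y₂) = r := by
  rw [EuclideanSpace.dist_eq, Fin.sum_univ_two]
  rw [P_apply0, P_apply0, P_apply1, P_apply1]
  rw [Real.dist_eq, Real.dist_eq, sq_abs, sq_abs, h, Real.sqrt_sq hr]

-- linear map to ℝ × ℝ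
noncomputable def ψ : EuclideanSpace ℝ (Fin 2) →ₗ[ℝ] ℝ × ℝ where
  toFun p := (p 0, p 1)
  map_add' _ _ := rfl
  map_smul' _ _ := rfl

lemma transport (S : Set (EuclideanSpace ℝ (Fin 2))) (hS : S.Finite) :
    volume (convexHull ℝ S) = volume (convexHull ℝ (⇑ψ '' S)) := by
  set e := (MeasurableEquiv.toLp 2 (Fin 2 → ℝ)).symm.trans MeasurableEquiv.finTwoArrow with he
  have hmp : MeasurePreserving (⇑e) volume volume :=
    (volume_preserving_finTwoArrow ℝ).comp (EuclideanSpace.volume_preserving_symm_measurableEquiv_toLp (Fin 2))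
  have hcoe : ⇑e = ⇑ψ := by funext p; rfl
  have himg : ⇑e '' (convexHull ℝ S) = convexHull ℝ (⇑ψ '' S) := by
    rw [hcoe, ψ.image_convexHull]
  have hpre : e ⁻¹' (⇑e '' (convexHull ℝ S)) = convexHull ℝ S :=
    Set.preimage_image_eq _ e.injective
  have hnm : NullMeasurableSet (⇑e '' (convexHull ℝ S)) volume := by
    rw [himg]
    exact ((hS.image _).isCompact_convexHull ℝ).measurableSet.nullMeasurableSet
  rw [← hpre, hmp.measure_preimage hnm, himg]

end RatPentagon


theorem rational_pentagon_example :
    ∃ (O A B C D E : EuclideanSpace ℝ (Fin 2)),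
      dist O A = 65/18 ∧ dist O B = 65/18 ∧ dist O C = 65/18 ∧
      dist O D = 65/18 ∧ dist O E = 65/18 ∧
      dist A B = 11/3 ∧ dist B C = 56/9 ∧ dist C D = 13/3 ∧
      dist D E = 11/3 ∧ dist E A = 25/9 ∧
      dist C E = 20/3 ∧
      ({dist A C, dist B D, dist A D, dist B E} : Multiset ℝ) =
        ({65/9, 52/9, 323/45, 52/9} : Multiset ℝ) ∧
      MeasureTheory.volume
        (convexHull ℝ ({A, B, C, D, E} : Set (EuclideanSpace ℝ (Fin 2)))) = 28 := by
  refine ⟨RatPentagon.P 0 0, RatPentagon.P (65/18) 0, RatPentagon.P (2047/1170) (616/195),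
    RatPentagon.P (-65/18) 0, RatPentagon.P (-91/90) (-52/15), RatPentagon.P (595/234) (-100/39),
    RatPentagon.dist_P _ _ _ _ _ (by norm_num) (by norm_num),
    RatPentagon.dist_P _ _ _ _ _ (by norm_num) (by norm_num),
    RatPentagon.dist_P _ _ _ _ _ (by norm_num) (by norm_num),
    RatPentagon.dist_P _ _ _ _ _ (by norm_num) (by norm_num),
    RatPentagon.dist_P _ _ _ _ _ (by norm_num) (by norm_num),
    RatPentagon.dist_P _ _ _ _ _ (by norm_num) (by norm_num),
    RatPentagon.dist_P _ _ _ _ _ (by norm_num) (by norm_num),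
    RatPentagon.dist_P _ _ _ _ _ (by norm_num) (by norm_num),
    RatPentagon.dist_P _ _ _ _ _ (by norm_num) (by norm_num),
    RatPentagon.dist_P _ _ _ _ _ (by norm_num) (by norm_num),
    RatPentagon.dist_P _ _ _ _ _ (by norm_num) (by norm_num),
    ?_, ?_⟩
  · rw [RatPentagon.dist_P _ _ _ _ (65/9 : ℝ) (by norm_num) (by norm_num),
      RatPentagon.dist_P _ _ _ _ (323/45 : ℝ) (by norm_num) (by norm_num),
      RatPentagon.dist_P _ _ _ _ (52/9 : ℝ) (by norm_num) (by norm_num),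
      RatPentagon.dist_P _ _ _ _ (52/9 : ℝ) (by norm_num) (by norm_num)]
    exact congrArg _ (Multiset.cons_swap _ _ _)
  · rw [RatPentagon.transport _ (Set.toFinite _)]
    have himg : ⇑RatPentagon.ψ '' ({RatPentagon.P (65/18) 0, RatPentagon.P (2047/1170) (616/195),
        RatPentagon.P (-65/18) 0, RatPentagon.P (-91/90) (-52/15),
        RatPentagon.P (595/234) (-100/39)} : Set (EuclideanSpace ℝ (Fin 2))) =
        ({RatPentagon.pa, RatPentagon.pb, RatPentagon.pc, RatPentagon.pd, RatPentagon.pe} :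
          Set (ℝ × ℝ)) := by
      simp only [Set.image_insert_eq, Set.image_singleton]
      rfl
    rw [himg, RatPentagon.penta_vol]
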